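/- Let H be a Hardy field containing ℒℰ and let f ∈ H have polynomial growth. Then f can be written in the form f(t) = p(t) + x(t), where p is a polynomial with real coefficients and x ∈ H is strongly non-polynomial, i.e., either t^k ≺ x(t) ≺ t^{k+1} for some nonnegative integer k, or x(t) → 0 as t → +∞. -/

import Mathlib

open Filter MeasureTheory Topology

noncomputable section

/-- `f ≺ g` : `f(t)/g(t) → 0` as `t → +∞`. -/
def Prec (f g : ℝ → ℝ) : Prop :=
  Filter.Tendsto (fun t => f t / g t) Filter.atTop (nhds 0)

/-- `f ≪ g` : `|f(t)| ≤ C |g(t)|` for some constant `C > 0` and all large `t`. -/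
def Dom (f g : ℝ → ℝ) : Prop :=
  ∃ C : ℝ, 0 < C ∧ ∀ᶠ t in Filter.atTop, |f t| ≤ C * |g t|

/-- `f` has polynomial growth: `f(t)/t^k → 0` for some positive integer `k`. -/
def PolyGrowth (f : ℝ → ℝ) : Prop :=
  ∃ k : ℕ, 0 < k ∧ Filter.Tendsto (fun t => f t / t ^ k) Filter.atTop (nhds 0)

/-- The logarithmico-exponential functions of Hardy: built from constants and the
identity by `+`, `-`, `*`, `/`, `exp`, `log` and composition. -/
inductive IsLE : (ℝ → ℝ) → Prop
  | const (c : ℝ) : IsLE fun _ => c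
  | id : IsLE fun t => t
  | add {f g} : IsLE f → IsLE g → IsLE (f + g)
  | sub {f g} : IsLE f → IsLE g → IsLE (f - g)
  | mul {f g} : IsLE f → IsLE g → IsLE (f * g)
  | div {f g} : IsLE f → IsLE g → IsLE (f / g)
  | exp {f} : IsLE f → IsLE fun t => Real.exp (f t)
  | log {f} : IsLE f → IsLE fun t => Real.log (f t)
  | comp {f g} : IsLE f → IsLE g → IsLE (f ∘ g)

/-- A Hardy field: a collection of (representatives of) germs at `+∞` of real functions,
closed under germ equality, forming a field under pointwise operations, and closed under
differentiation (each element is eventually differentiable, with derivative again in `H`). -/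
structure IsHardyField (H : Set (ℝ → ℝ)) : Prop where
  mem_congr : ∀ {f g : ℝ → ℝ}, f ∈ H → f =ᶠ[Filter.atTop] g → g ∈ H
  zero_mem : (fun _ : ℝ => (0 : ℝ)) ∈ H
  one_mem : (fun _ : ℝ => (1 : ℝ)) ∈ H
  add_mem : ∀ {f g : ℝ → ℝ}, f ∈ H → g ∈ H → f + g ∈ H
  neg_mem : ∀ {f : ℝ → ℝ}, f ∈ H → -f ∈ H
  mul_mem : ∀ {f g : ℝ → ℝ}, f ∈ H → g ∈ H → f * g ∈ H
  inv_mem : ∀ {f : ℝ → ℝ}, f ∈ H → ¬ (f =ᶠ[Filter.atTop] fun _ => (0 : ℝ)) →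
    (fun t => (f t)⁻¹) ∈ H
  eventuallyDifferentiable : ∀ {f : ℝ → ℝ}, f ∈ H →
    ∀ᶠ t in Filter.atTop, DifferentiableAt ℝ f t
  deriv_mem : ∀ {f : ℝ → ℝ}, f ∈ H → deriv f ∈ H

/-- `H` contains (the germs of) all logarithmico-exponential functions. -/
def ContainsLE (H : Set (ℝ → ℝ)) : Prop := ∀ f : ℝ → ℝ, IsLE f → f ∈ H

/-- strongly non-polynomial: `t^k ≺ f ≺ t^{k+1}` for some `k ∈ ℕ`, or `f(t) → 0`. -/
def StronglyNonPoly (f : ℝ → ℝ) : Prop :=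
  (∃ k : ℕ, Prec (fun t => t ^ k) f ∧ Prec f fun t => t ^ (k + 1)) ∨
    Filter.Tendsto f Filter.atTop (nhds 0)


section Aux

variable {H : Set (ℝ → ℝ)}

lemma isLE_pow (j : ℕ) : IsLE fun t : ℝ => t ^ j := by
  induction j with
  | zero => simpa using IsLE.const 1
  | succ n ih =>
    have : (fun t : ℝ => t ^ (n + 1)) = (fun t : ℝ => t ^ n) * fun t => t := by
      funext t; simp [pow_succ]
    rw [this]; exact IsLE.mul ih IsLE.id

lemma pow_not_ev_zero (j : ℕ) :
    ¬ ((fun t : ℝ => t ^ j) =ᶠ[Filter.atTop] fun _ => (0 : ℝ)) := by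
  intro h
  obtain ⟨t, h0, h1⟩ := (h.and (Filter.eventually_ge_atTop (1 : ℝ))).exists
  have : (0:ℝ) < t ^ j := pow_pos (lt_of_lt_of_le one_pos h1) j
  simp only [h0] at this
  exact lt_irrefl _ this

lemma sub_mem' (hH : IsHardyField H) {f g : ℝ → ℝ} (hf : f ∈ H) (hg : g ∈ H) :
    (fun t => f t - g t) ∈ H := by
  have := hH.add_mem hf (hH.neg_mem hg)
  have he : (f + -g) = fun t => f t - g t := by funext t; simp [sub_eq_add_neg]
  rwa [he] at this

lemma div_pow_mem (hH : IsHardyField H) (hLE : ContainsLE H) {f : ℝ → ℝ}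
    (hf : f ∈ H) (j : ℕ) : (fun t => f t / t ^ j) ∈ H := by
  have hp : (fun t : ℝ => t ^ j) ∈ H := hLE _ (isLE_pow j)
  have hinv := hH.inv_mem hp (pow_not_ev_zero j)
  have := hH.mul_mem hf hinv
  have he : (f * fun t : ℝ => (t ^ j)⁻¹) = fun t => f t / t ^ j := by
    funext t; simp [div_eq_mul_inv]
  rwa [he] at this

/-- In a Hardy field, every element is eventually zero or eventually nonzero. -/
lemma ev_zero_or_ev_ne (hH : IsHardyField H) {f : ℝ → ℝ} (hf : f ∈ H) :
    (f =ᶠ[Filter.atTop] fun _ => (0 : ℝ)) ∨ ∀ᶠ t in Filter.atTop, f t ≠ 0 := by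
  by_cases h0 : f =ᶠ[Filter.atTop] fun _ => (0 : ℝ)
  · exact Or.inl h0
  right
  by_contra hne
  set h : ℝ → ℝ := f * fun t => (f t)⁻¹ with hh
  have hval : ∀ t, h t = if f t = 0 then 0 else 1 := by
    intro t; by_cases hft : f t = 0 <;> simp [hh, hft]
  have hhmem : h ∈ H := hH.mul_mem hf (hH.inv_mem hf h0)
  have hcont : ∀ᶠ t in Filter.atTop, ContinuousAt h t :=
    (hH.eventuallyDifferentiable hhmem).mono fun t ht => ht.continuousAt
  obtain ⟨T, hT⟩ := Filter.eventually_atTop.1 hcont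
  have hfreq0 : ∃ᶠ t in Filter.atTop, f t = 0 := by
    rw [Filter.not_eventually] at hne
    simpa using hne
  have hfreq1 : ∃ᶠ t in Filter.atTop, f t ≠ 0 := by
    intro hev
    exact h0 (hev.mono fun t ht => by simpa using not_not.1 ht)
  obtain ⟨a, ha0, haT⟩ := (hfreq0.and_eventually (Filter.eventually_ge_atTop T)).exists
  obtain ⟨b, hb0, hba⟩ := (hfreq1.and_eventually (Filter.eventually_ge_atTop a)).exists
  have hab : a ≤ b := hba
  have hco : ContinuousOn h (Set.Icc a b) := fun t ht =>
    (hT t (le_trans haT ht.1)).continuousWithinAt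
  have hha : h a = 0 := by rw [hval]; simp [ha0]
  have hhb : h b = 1 := by rw [hval]; simp [hb0]
  have hsub : Set.Icc (h a) (h b) ⊆ h '' Set.Icc a b := intermediate_value_Icc hab hco
  have hmem : (1/2 : ℝ) ∈ Set.Icc (h a) (h b) := by rw [hha, hhb]; norm_num
  obtain ⟨t, _, ht⟩ := hsub hmem
  rw [hval] at ht
  by_cases hft : f t = 0 <;> simp [hft] at ht

/-- In a Hardy field, derivatives are eventually of one sign. -/
lemma ev_nonneg_or_nonpos (hH : IsHardyField H) {f : ℝ → ℝ} (hf : f ∈ H) :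
    (∀ᶠ t in Filter.atTop, 0 ≤ f t) ∨ ∀ᶠ t in Filter.atTop, f t ≤ 0 := by
  rcases ev_zero_or_ev_ne hH hf with h | h
  · exact Or.inl (h.mono fun t ht => by simp [ht])
  have hcont : ∀ᶠ t in Filter.atTop, ContinuousAt f t :=
    (hH.eventuallyDifferentiable hf).mono fun t ht => ht.continuousAt
  obtain ⟨T, hT⟩ := Filter.eventually_atTop.1 (h.and hcont)
  rcases lt_or_ge 0 (f T) with hpos | hneg
  · left
    refine Filter.eventually_atTop.2 ⟨T, fun b hb => le_of_lt ?_⟩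
    by_contra hcon
    push_neg at hcon
    have hb0 : f b < 0 := lt_of_le_of_ne hcon (hT b hb).1
    have hco : ContinuousOn f (Set.Icc T b) := fun t ht =>
      ((hT t ht.1).2).continuousWithinAt
    have := intermediate_value_Icc' hb hco
    have h0 : (0:ℝ) ∈ Set.Icc (f b) (f T) := ⟨le_of_lt hb0, le_of_lt hpos⟩
    obtain ⟨t, ht, ht0⟩ := this h0
    exact (hT t ht.1).1 ht0
  · right
    have hneg' : f T < 0 := lt_of_le_of_ne hneg (hT T le_rfl).1
    refine Filter.eventually_atTop.2 ⟨T, fun b hb => le_of_lt ?_⟩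
    by_contra hcon
    push_neg at hcon
    have hb0 : 0 < f b := lt_of_le_of_ne hcon (Ne.symm ((hT b hb).1))
    have hco : ContinuousOn f (Set.Icc T b) := fun t ht =>
      ((hT t ht.1).2).continuousWithinAt
    have := intermediate_value_Icc hb hco
    obtain ⟨t, ht, ht0⟩ := this ⟨le_of_lt hneg', le_of_lt hb0⟩
    exact (hT t ht.1).1 ht0

/-- In a Hardy field, every element tends to `+∞`, `-∞` or a finite limit. -/
lemma limit_trichotomy (hH : IsHardyField H) {f : ℝ → ℝ} (hf : f ∈ H) :
    Filter.Tendsto f Filter.atTop Filter.atTop ∨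
      Filter.Tendsto f Filter.atTop Filter.atBot ∨
      ∃ l : ℝ, Filter.Tendsto f Filter.atTop (nhds l) := by
  have hd := hH.eventuallyDifferentiable hf
  rcases ev_nonneg_or_nonpos hH (hH.deriv_mem hf) with hs | hs
  · -- f eventually monotone
    obtain ⟨T, hT⟩ := Filter.eventually_atTop.1 (hd.and hs)
    have hmono : MonotoneOn f (Set.Ici T) := by
      apply monotoneOn_of_deriv_nonneg (convex_Ici T)
      · exact fun t ht => ((hT t ht).1).continuousAt.continuousWithinAt
      · intro t ht
        rw [interior_Ici] at ht
        exact ((hT t (le_of_lt ht)).1).differentiableWithinAt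
      · intro t ht
        rw [interior_Ici] at ht
        exact (hT t (le_of_lt ht)).2
    set G : ℝ → ℝ := fun s => f (max s T) with hG
    have hGmono : Monotone G := fun s s' hss =>
      hmono (le_max_right s T) (le_max_right s' T) (max_le_max hss le_rfl)
    have hfG : G =ᶠ[Filter.atTop] f :=
      (Filter.eventually_ge_atTop T).mono fun t ht => by simp [hG, max_eq_left ht]
    rcases tendsto_of_monotone hGmono with h | ⟨l, h⟩
    · exact Or.inl (h.congr' hfG)
    · exact Or.inr (Or.inr ⟨l, h.congr' hfG⟩)
  · -- -f eventually monotone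
    have hnf : (-f) ∈ H := hH.neg_mem hf
    have hd' : ∀ᶠ t in Filter.atTop, DifferentiableAt ℝ (-f) t :=
      hd.mono fun t ht => ht.neg
    have hs' : ∀ᶠ t in Filter.atTop, 0 ≤ deriv (-f) t := by
      filter_upwards [hs, hd] with t ht htd
      have : deriv (-f) t = -deriv f t := by
        have : (-f) = fun x => -f x := rfl
        rw [this, deriv.fun_neg]
      rw [this]; linarith
    obtain ⟨T, hT⟩ := Filter.eventually_atTop.1 (hd'.and hs')
    have hmono : MonotoneOn (-f) (Set.Ici T) := by
      apply monotoneOn_of_deriv_nonneg (convex_Ici T)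
      · exact fun t ht => ((hT t ht).1).continuousAt.continuousWithinAt
      · intro t ht
        rw [interior_Ici] at ht
        exact ((hT t (le_of_lt ht)).1).differentiableWithinAt
      · intro t ht
        rw [interior_Ici] at ht
        exact (hT t (le_of_lt ht)).2
    set G : ℝ → ℝ := fun s => (-f) (max s T) with hG
    have hGmono : Monotone G := fun s s' hss =>
      hmono (le_max_right s T) (le_max_right s' T) (max_le_max hss le_rfl)
    have hfG : G =ᶠ[Filter.atTop] (-f) :=
      (Filter.eventually_ge_atTop T).mono fun t ht => by simp [hG, max_eq_left ht]
    rcases tendsto_of_monotone hGmono with h | ⟨l, h⟩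
    · have : Filter.Tendsto (-f) Filter.atTop Filter.atTop := h.congr' hfG
      refine Or.inr (Or.inl ?_)
      have h2 : Filter.Tendsto (fun t => -((-f) t)) Filter.atTop Filter.atBot :=
        Filter.tendsto_neg_atBot_iff.2 this
      simpa using h2
    · have : Filter.Tendsto (-f) Filter.atTop (nhds l) := h.congr' hfG
      refine Or.inr (Or.inr ⟨-l, ?_⟩)
      have := this.neg
      simpa using this

end Aux


section Key

variable {H : Set (ℝ → ℝ)}

lemma div_pow_succ_tendsto {f : ℝ → ℝ} {j : ℕ} {l : ℝ}
    (h : Filter.Tendsto (fun t => f t / t ^ j) Filter.atTop (nhds l)) :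
    Filter.Tendsto (fun t => f t / t ^ (j + 1)) Filter.atTop (nhds 0) := by
  have h2 : Filter.Tendsto (fun t : ℝ => (f t / t ^ j) * t⁻¹) Filter.atTop (nhds (l * 0)) :=
    h.mul tendsto_inv_atTop_zero
  rw [mul_zero] at h2
  refine h2.congr' ?_
  filter_upwards [Filter.eventually_gt_atTop (0:ℝ)] with t ht
  rw [pow_succ, ← div_div]; ring

lemma key_induction (hH : IsHardyField H) (hLE : ContainsLE H) :
    ∀ k : ℕ, ∀ f : ℝ → ℝ, f ∈ H →
      Filter.Tendsto (fun t => f t / t ^ k) Filter.atTop (nhds 0) →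
      ∃ (p : Polynomial ℝ) (x : ℝ → ℝ), x ∈ H ∧ StronglyNonPoly x ∧
        ∀ t, f t = p.eval t + x t := by
  intro k
  induction k using Nat.strong_induction_on with
  | _ k IH =>
  intro f hf hk
  classical
  set P : ℕ → Prop :=
    fun j => ∃ l : ℝ, Filter.Tendsto (fun t => f t / t ^ j) Filter.atTop (nhds l) with hP
  have hPk : P k := ⟨0, hk⟩
  have hex : ∃ j, P j := ⟨k, hPk⟩
  set m := Nat.find hex with hm
  obtain ⟨c, hc⟩ : P m := Nat.find_spec hex
  rcases Nat.eq_zero_or_pos m with hm0 | hmpos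
  · -- m = 0 : f tends to c
    rw [hm0] at hc
    have hfc : Filter.Tendsto f Filter.atTop (nhds c) := by
      refine hc.congr ?_
      intro t; simp
    refine ⟨Polynomial.C c, fun t => f t - c, ?_, ?_, ?_⟩
    · exact sub_mem' hH hf (hLE _ (IsLE.const c))
    · right
      simpa using hfc.sub_const c
    · intro t; simp
  · -- m = m' + 1
    obtain ⟨m', hmeq⟩ : ∃ m', m = m' + 1 := ⟨m - 1, by omega⟩
    rw [hmeq] at hc
    have hnot : ¬ P m' := Nat.find_min hex (by omega)
    have hprec : Prec (fun t => t ^ m') f := by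
      rcases limit_trichotomy hH (div_pow_mem hH hLE hf m') with htop | hbot | hfin
      · have h1 : Filter.Tendsto (fun t => (f t / t ^ m')⁻¹) Filter.atTop (nhds 0) :=
          htop.inv_tendsto_atTop
        refine h1.congr fun t => ?_
        rw [inv_div]
      · have h1 : Filter.Tendsto (fun t => -(f t / t ^ m')) Filter.atTop Filter.atTop := by
          exact Filter.tendsto_neg_atBot_iff.1 (by simpa using hbot)
        have h2 : Filter.Tendsto (fun t => (-(f t / t ^ m'))⁻¹) Filter.atTop (nhds 0) :=
          h1.inv_tendsto_atTop
        have h3 : Filter.Tendsto (fun t => -(-(f t / t ^ m'))⁻¹) Filter.atTop (nhds 0) := by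
          simpa using h2.neg
        refine h3.congr fun t => ?_
        rw [inv_neg, neg_neg, inv_div]
      · exact absurd hfin hnot
    by_cases hc0 : c = 0
    · -- f itself is strongly non-polynomial
      refine ⟨0, f, hf, Or.inl ⟨m', hprec, ?_⟩, fun t => by simp⟩
      rw [hc0] at hc
      exact hc
    · -- subtract c * t^m and recurse
      have hmk : m' + 1 < k := by
        have hle : m' + 1 ≤ k := by
          have := Nat.find_le (h := hex) hPk
          omega
        rcases lt_or_eq_of_le hle with h | h
        · exact h
        · exfalso
          apply hc0
          rw [h] at hc
          exact tendsto_nhds_unique hc hk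
      set g : ℝ → ℝ := fun t => f t - c * t ^ (m' + 1) with hg
      have hgH : g ∈ H := by
        refine sub_mem' hH hf (hLE _ ?_)
        have : (fun t : ℝ => c * t ^ (m' + 1)) =
            (fun _ : ℝ => c) * fun t : ℝ => t ^ (m' + 1) := rfl
        rw [this]
        exact IsLE.mul (IsLE.const c) (isLE_pow _)
      have hg0 : Filter.Tendsto (fun t => g t / t ^ (m' + 1)) Filter.atTop (nhds 0) := by
        have h1 : Filter.Tendsto (fun t => f t / t ^ (m' + 1) - c) Filter.atTop
            (nhds (c - c)) := hc.sub_const c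
        rw [sub_self] at h1
        refine h1.congr' ?_
        filter_upwards [Filter.eventually_gt_atTop (0:ℝ)] with t ht
        have hne : (t : ℝ) ^ (m' + 1) ≠ 0 := pow_ne_zero _ (ne_of_gt ht)
        field_simp [hg]; ring
      obtain ⟨p, x, hxH, hsnp, hev⟩ := IH (m' + 1) hmk g hgH hg0
      refine ⟨p + Polynomial.C c * Polynomial.X ^ (m' + 1), x, hxH, hsnp, fun t => ?_⟩
      have := hev t
      simp only [hg] at this
      simp [Polynomial.eval_add, Polynomial.eval_mul, Polynomial.eval_pow]
      linarith

end Key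


/-- Every `f` of polynomial growth in a Hardy field containing ℒℰ can be
written as `f = p + x` with `p` a real polynomial and `x ∈ H` strongly non-polynomial. -/
theorem stmt_16 (H : Set (ℝ → ℝ)) (hH : IsHardyField H) (hLE : ContainsLE H)
    (f : ℝ → ℝ) (hf : f ∈ H) (hgr : PolyGrowth f) :
    ∃ (p : Polynomial ℝ) (x : ℝ → ℝ), x ∈ H ∧ StronglyNonPoly x ∧
      ∀ t, f t = p.eval t + x t := by
  obtain ⟨k, -, hk⟩ := hgr
  exact key_induction hH hLE k f hf hk

end
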